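/- Let p > 1 be a real number and k ≥ 0 a natural number. For integers j ≥ 1 define P_{p,j,k} := 1 − (1 + p^{1−j−k}·(p^k − 1)/(p − 1)) · ∏_{i=0}^{k−1} (1 − p^{−j−i}), and for 1 ≤ i ≤ k define the Gaussian binomial coefficient at 1/p by [k choose i]_{1/p} := ∏_{m=1}^{i} (1 − p^{−(k−m+1)})/(1 − p^{−m}). Then the series Σ_{j=1}^∞ P_{p,j,k} converges and Σ_{j=1}^∞ P_{p,j,k} = Σ_{i=1}^{k} ((−1)^{i−1}/(p^{i(i−1)/2}·(p^i − 1))) · [k choose i]_{1/p} + 1/(p^{k+1} − 1) − 1/(p − 1). -/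

import Mathlib

open Finset
section
variable {q : ℝ} (hq0 : 0 < q) (hq1 : q < 1)


open Finset

/-- Gaussian binomial `[k choose a]_q` as a real product. -/
noncomputable def stGb (q : ℝ) (k a : ℕ) : ℝ :=
  ∏ m ∈ Finset.Icc 1 a, (1 - q ^ (k + 1 - m)) / (1 - q ^ m)

lemma st_one_sub_pow_ne {q : ℝ} (hq0 : 0 < q) (hq1 : q < 1) {m : ℕ} (hm : 1 ≤ m) :
    1 - q ^ m ≠ 0 := by
  have : q ^ m < 1 := pow_lt_one₀ hq0.le hq1 (by omega)
  linarith

lemma stGb_zero (q : ℝ) (k : ℕ) : stGb q k 0 = 1 := by simp [stGb]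

lemma stGb_succ (q : ℝ) (k a : ℕ) :
    stGb q k (a + 1) = stGb q k a * ((1 - q ^ (k - a)) / (1 - q ^ (a + 1))) := by
  rw [stGb, stGb, Finset.prod_Icc_succ_top (by omega), Nat.succ_sub_succ]

lemma stGb_of_lt (q : ℝ) {k a : ℕ} (h : k < a) : stGb q k a = 0 := by
  refine Finset.prod_eq_zero (i := k + 1) (by simp [Finset.mem_Icc]; omega) ?_
  simp [Nat.sub_self]

lemma stGb_diag {q : ℝ} (hq0 : 0 < q) (hq1 : q < 1) (k : ℕ) : stGb q k k = 1 := by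
  rw [stGb, Finset.prod_div_distrib]
  rw [div_eq_one_iff_eq (Finset.prod_ne_zero_iff.2 fun m hm =>
    st_one_sub_pow_ne hq0 hq1 (Finset.mem_Icc.1 hm).1)]
  have h1 : Finset.Icc 1 k = Finset.Ico 1 (k + 1) := rfl
  rw [h1, Finset.prod_Ico_eq_prod_range, Finset.prod_Ico_eq_prod_range]
  simp only [Nat.add_sub_cancel]
  rw [← Finset.prod_range_reflect (fun i => 1 - q ^ (1 + i)) k]
  apply Finset.prod_congr rfl
  intro i hi
  have hik : i < k := Finset.mem_range.1 hi
  congr 2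
  omega

lemma stGb_R2 {q : ℝ} (hq0 : 0 < q) (hq1 : q < 1) (k : ℕ) :
    ∀ a : ℕ, stGb q (k + 1) a * (1 - q ^ (k + 1 - a)) = stGb q k a * (1 - q ^ (k + 1)) := by
  intro a
  induction a with
  | zero => simp [stGb_zero]
  | succ a ih =>
    by_cases hak : a ≤ k
    · rw [stGb_succ, stGb_succ, Nat.succ_sub_succ]
      have hb : (1 : ℝ) - q ^ (a + 1) ≠ 0 := st_one_sub_pow_ne hq0 hq1 (by omega)
      field_simp
      linear_combination (1 - q ^ (k - a)) * ih
    · rw [stGb_of_lt q (by omega), stGb_of_lt q (by omega)]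
      ring

lemma stGb_G3 {q : ℝ} (hq0 : 0 < q) (hq1 : q < 1) (k a : ℕ) :
    stGb q (k + 1) (a + 1) * (1 - q ^ (a + 1)) = stGb q k a * (1 - q ^ (k + 1)) := by
  have h1 := stGb_succ q (k + 1) a
  have h2 := stGb_R2 hq0 hq1 k a
  have hb : (1 : ℝ) - q ^ (a + 1) ≠ 0 := st_one_sub_pow_ne hq0 hq1 (by omega)
  rw [h1]
  field_simp
  linear_combination h2

lemma stGb_pascal {q : ℝ} (hq0 : 0 < q) (hq1 : q < 1) (k a : ℕ) :
    stGb q (k + 1) (a + 1) = stGb q k (a + 1) + q ^ (k - a) * stGb q k a := by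
  rcases lt_trichotomy a k with h | h | h
  · -- a < k
    have hka : 1 ≤ k - a := by omega
    have hA : (1 : ℝ) - q ^ (k - a) ≠ 0 := st_one_sub_pow_ne hq0 hq1 hka
    have hB : (1 : ℝ) - q ^ (a + 1) ≠ 0 := st_one_sub_pow_ne hq0 hq1 (by omega)
    have h2 : stGb q (k + 1) (a + 1) * (1 - q ^ (k - a)) = stGb q k (a + 1) * (1 - q ^ (k + 1)) := by
      have := stGb_R2 hq0 hq1 k (a + 1)
      rwa [Nat.succ_sub_succ] at this
    have h1 : stGb q k (a + 1) * (1 - q ^ (a + 1)) = stGb q k a * (1 - q ^ (k - a)) := by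
      rw [stGb_succ]; field_simp
    have key : q ^ (k - a) * q ^ (a + 1) = q ^ (k + 1) := by
      rw [← pow_add]; congr 1; omega
    have hcancel : ∀ x y : ℝ, x * ((1 - q ^ (a + 1)) * (1 - q ^ (k - a))) =
        y * ((1 - q ^ (a + 1)) * (1 - q ^ (k - a))) → x = y := by
      intro x y hxy
      exact mul_right_cancel₀ (mul_ne_zero hB hA) hxy
    apply hcancel
    linear_combination (1 - q ^ (a + 1)) * h2 + (q ^ (k - a) - q ^ (k + 1)) * h1 +
      stGb q k a * (1 - q ^ (k - a)) * key
  · -- a = k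
    subst h
    rw [stGb_diag hq0 hq1, stGb_of_lt q (by omega), Nat.sub_self, stGb_diag hq0 hq1]
    ring
  · rw [stGb_of_lt q (by omega), stGb_of_lt q (by omega), stGb_of_lt q (by omega)]
    ring

lemma st_tri (a : ℕ) : (a + 1) * a / 2 = a * (a - 1) / 2 + a := by
  rcases a with _ | b
  · simp
  · obtain ⟨c, hc⟩ := Nat.even_mul_succ_self b
    have h3 : (b + 1 + 1) * (b + 1) = c + c + 2 * (b + 1) := by rw [← hc]; ring
    have h4 : (b + 1) * (b + 1 - 1) = c + c := by rw [Nat.add_sub_cancel, Nat.mul_comm, hc]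
    omega

/-- coefficient in the q-binomial expansion -/
noncomputable def stT (q : ℝ) (k a : ℕ) : ℝ := (-1) ^ a * q ^ (a * (a - 1) / 2) * stGb q k a

lemma stT_zero (q : ℝ) (k : ℕ) : stT q k 0 = 1 := by simp [stT, stGb_zero]

lemma stT_top (q : ℝ) (k : ℕ) : stT q k (k + 1) = 0 := by
  simp [stT, stGb_of_lt q (Nat.lt_succ_self k)]

lemma stT_pascal {q : ℝ} (hq0 : 0 < q) (hq1 : q < 1) (k a : ℕ) (ha : a ≤ k) :
    stT q (k + 1) (a + 1) = stT q k (a + 1) - q ^ k * stT q k a := by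
  unfold stT
  rw [stGb_pascal hq0 hq1 k a]
  have e1 : q ^ ((a + 1) * a / 2) * q ^ (k - a) = q ^ k * q ^ (a * (a - 1) / 2) := by
    rw [← pow_add, ← pow_add]
    congr 1
    have := st_tri a
    omega
  simp only [Nat.succ_sub_succ, Nat.add_sub_cancel, Nat.sub_zero, pow_succ]
  linear_combination ((-1 : ℝ) ^ a * (-1) * stGb q k a) * e1

lemma st_expand {q : ℝ} (hq0 : 0 < q) (hq1 : q < 1) (k : ℕ) (x : ℝ) :
    ∏ i ∈ Finset.range k, (1 - x * q ^ i)
      = ∑ a ∈ Finset.range (k + 1), stT q k a * x ^ a := by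
  induction k with
  | zero => simp [stT_zero]
  | succ k ih =>
    rw [Finset.prod_range_succ, ih,
      Finset.sum_range_succ' (fun a => stT q (k + 1) a * x ^ a) (k + 1)]
    have h0 : ∑ a ∈ Finset.range (k + 1), stT q k a * x ^ a
        = (∑ a ∈ Finset.range (k + 1), stT q k (a + 1) * x ^ (a + 1)) + 1 := by
      have hA := Finset.sum_range_succ (fun a => stT q k a * x ^ a) (k + 1)
      have hB := Finset.sum_range_succ' (fun a => stT q k a * x ^ a) (k + 1)
      rw [hA] at hB
      simp only [stT_top, stT_zero, zero_mul, add_zero, pow_zero, one_mul] at hB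
      exact hB
    have hR : ∑ a ∈ Finset.range (k + 1), stT q (k + 1) (a + 1) * x ^ (a + 1)
        = (∑ a ∈ Finset.range (k + 1), stT q k (a + 1) * x ^ (a + 1))
          - q ^ k * ∑ a ∈ Finset.range (k + 1), stT q k a * x ^ a * x := by
      rw [Finset.mul_sum, ← Finset.sum_sub_distrib]
      refine Finset.sum_congr rfl fun a ha => ?_
      rw [stT_pascal hq0 hq1 k a (Nat.lt_succ_iff.1 (Finset.mem_range.1 ha))]
      ring
    have hL : (∑ a ∈ Finset.range (k + 1), stT q k a * x ^ a) * (1 - x * q ^ k)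
        = ((∑ a ∈ Finset.range (k + 1), stT q k (a + 1) * x ^ (a + 1)) + 1)
          - q ^ k * ∑ a ∈ Finset.range (k + 1), stT q k a * x ^ a * x := by
      rw [mul_one_sub]
      have h2 : (∑ a ∈ Finset.range (k + 1), stT q k a * x ^ a) * (x * q ^ k)
          = q ^ k * ∑ a ∈ Finset.range (k + 1), stT q k a * x ^ a * x := by
        rw [Finset.sum_mul, Finset.mul_sum]
        exact Finset.sum_congr rfl fun a _ => by ring
      rw [h2, h0]
    rw [hL, hR, stT_zero]
    ring

lemma st_numer {q : ℝ} (hq0 : 0 < q) (hq1 : q < 1) (k : ℕ) :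
    ∑ a ∈ Finset.range (k + 1),
      (-1 : ℝ) ^ a * q ^ ((a + 1) * a / 2) * stGb q (k + 1) (a + 1) = 1 := by
  have he := st_expand hq0 hq1 (k + 1) 1
  have hz : ∏ i ∈ Finset.range (k + 1), (1 - 1 * q ^ i) = 0 :=
    Finset.prod_eq_zero (Finset.mem_range.2 (Nat.succ_pos k)) (by simp)
  rw [hz, Finset.sum_range_succ' (fun a => stT q (k + 1) a * 1 ^ a) (k + 1)] at he
  simp only [one_pow, mul_one, stT_zero] at he
  have hterm : ∀ a : ℕ, stT q (k + 1) (a + 1)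
      = -((-1 : ℝ) ^ a * q ^ ((a + 1) * a / 2) * stGb q (k + 1) (a + 1)) := by
    intro a
    simp only [stT, Nat.add_sub_cancel, pow_succ]
    ring
  rw [Finset.sum_congr rfl (fun a _ => hterm a), Finset.sum_neg_distrib] at he
  linarith

lemma st_key {q : ℝ} (hq0 : 0 < q) (hq1 : q < 1) (k : ℕ) :
    ∑ a ∈ Finset.range (k + 1),
      (-1 : ℝ) ^ a * q ^ ((a + 1) * a / 2) * stGb q k a / (1 - q ^ (a + 1))
      = 1 / (1 - q ^ (k + 1)) := by
  have hC : (1 : ℝ) - q ^ (k + 1) ≠ 0 := st_one_sub_pow_ne hq0 hq1 (by omega)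
  have hterm : ∀ a : ℕ,
      (-1 : ℝ) ^ a * q ^ ((a + 1) * a / 2) * stGb q k a / (1 - q ^ (a + 1))
        = ((-1 : ℝ) ^ a * q ^ ((a + 1) * a / 2) * stGb q (k + 1) (a + 1)) / (1 - q ^ (k + 1)) := by
    intro a
    have hB : (1 : ℝ) - q ^ (a + 1) ≠ 0 := st_one_sub_pow_ne hq0 hq1 (by omega)
    rw [div_eq_div_iff hB hC]
    linear_combination (-((-1 : ℝ) ^ a * q ^ ((a + 1) * a / 2))) * (stGb_G3 hq0 hq1 k a)
  rw [Finset.sum_congr rfl (fun a _ => hterm a), ← Finset.sum_div,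
    st_numer hq0 hq1 k]


/-- For a real `p > 1` and `k ∈ ℕ`, with
`P_{p,j,k} = 1 − (1 + p^{1−j−k}·(p^k − 1)/(p − 1)) · ∏_{i=0}^{k−1} (1 − p^{−j−i})`
and the Gaussian binomial `[k choose i]_{1/p} = ∏_{m=1}^{i} (1 − p^{−(k−m+1)})/(1 − p^{−m})`,
the series `∑_{j ≥ 1} P_{p,j,k}` converges with sum
`∑_{i=1}^{k} (−1)^{i−1}/(p^{i(i−1)/2}(p^i − 1)) · [k choose i]_{1/p} + 1/(p^{k+1} − 1) − 1/(p − 1)`.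
(The summation variable `j : ℕ` below encodes `j + 1 ≥ 1`.) -/
theorem stmt19 (p : ℝ) (hp : 1 < p) (k : ℕ) :
    HasSum
      (fun j : ℕ =>
        1 - (1 + p ^ (1 - ((j : ℤ) + 1) - (k : ℤ)) * ((p ^ k - 1) / (p - 1))) *
          ∏ i ∈ Finset.range k, (1 - p ^ (-((j : ℤ) + 1) - (i : ℤ))))
      ((∑ i ∈ Finset.Icc 1 k,
          ((-1 : ℝ) ^ (i - 1) / (p ^ (i * (i - 1) / 2) * (p ^ i - 1))) *
            ∏ m ∈ Finset.Icc 1 i,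
              ((1 - p ^ (-((k : ℤ) - (m : ℤ) + 1))) / (1 - p ^ (-(m : ℤ))))) +
        1 / (p ^ (k + 1) - 1) - 1 / (p - 1)) := by
  have hp0 : (0 : ℝ) < p := lt_trans one_pos hp
  have hpne : p ≠ 0 := ne_of_gt hp0
  have hp1 : p - 1 ≠ 0 := by linarith
  set q : ℝ := p⁻¹ with hqdef
  have hq0 : 0 < q := inv_pos.2 hp0
  have hq1 : q < 1 := inv_lt_one_of_one_lt₀ hp
  have hqne : q ≠ 0 := ne_of_gt hq0
  have hqp : ∀ n : ℕ, p ^ (-(n : ℤ)) = q ^ n := by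
    intro n; rw [zpow_neg, zpow_natCast, hqdef, inv_pow]
  have hq_inv_pow : ∀ n : ℕ, q ^ n = (p ^ n)⁻¹ := fun n => by rw [hqdef, inv_pow]
  have hqinv : ∀ n : ℕ, q ^ n * p ^ n = 1 := fun n => by
    rw [hq_inv_pow, inv_mul_cancel₀ (pow_ne_zero n hpne)]
  have hone : ∀ m : ℕ, 1 ≤ m → (1 : ℝ) - q ^ m ≠ 0 := fun m hm =>
    st_one_sub_pow_ne hq0 hq1 hm
  have hpow1 : ∀ n : ℕ, 1 ≤ n → p ^ n - 1 ≠ 0 := by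
    intro n hn
    have : (1 : ℝ) < p ^ n := one_lt_pow₀ hp (by omega)
    linarith
  have hgeom : ∀ n : ℕ, 1 ≤ n → q ^ n / (1 - q ^ n) = 1 / (p ^ n - 1) := by
    intro n hn
    rw [div_eq_div_iff (hone n hn) (hpow1 n hn)]
    linear_combination (hqinv n)
  -- Step 1: rewrite each term of the series
  have hfun : ∀ j : ℕ,
      1 - (1 + p ^ (1 - ((j : ℤ) + 1) - (k : ℤ)) * ((p ^ k - 1) / (p - 1))) *
          ∏ i ∈ Finset.range k, (1 - p ^ (-((j : ℤ) + 1) - (i : ℤ)))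
        = ∑ a ∈ Finset.range (k + 1),
            (-(stT q k (a + 1)) - (1 - q ^ k) / (1 - q) * stT q k a) * (q ^ (a + 1)) ^ (j + 1) := by
    intro j
    have e1 : (1 - ((j : ℤ) + 1) - (k : ℤ)) = -(((j + k : ℕ) : ℤ)) := by push_cast; ring
    rw [e1, hqp]
    have e2 : ∏ i ∈ Finset.range k, (1 - p ^ (-((j : ℤ) + 1) - (i : ℤ)))
        = ∏ i ∈ Finset.range k, (1 - q ^ (j + 1) * q ^ i) := by
      refine Finset.prod_congr rfl fun i _ => ?_
      have e3 : (-((j : ℤ) + 1) - (i : ℤ)) = -(((j + 1 + i : ℕ) : ℤ)) := by push_cast; ring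
      rw [e3, hqp, pow_add]
    rw [e2, st_expand hq0 hq1 k (q ^ (j + 1))]
    have hd : q ^ (j + k) * ((p ^ k - 1) / (p - 1)) = q ^ (j + 1) * ((1 - q ^ k) / (1 - q)) := by
      have h1 : (1 : ℝ) - q ^ k = q ^ k * (p ^ k - 1) := by
        rw [mul_sub, hqinv k, mul_one]
      have h2 : (1 : ℝ) - q = q * (p - 1) := by
        have h3 := hqinv 1
        simp only [pow_one] at h3
        rw [mul_sub, h3, mul_one]
      rw [h1, h2, pow_add, pow_add]
      field_simp
    rw [hd]
    set x : ℝ := q ^ (j + 1) with hx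
    set d : ℝ := (1 - q ^ k) / (1 - q) with hdd
    have h0 : ∑ a ∈ Finset.range (k + 1), stT q k a * x ^ a
        = (∑ a ∈ Finset.range (k + 1), stT q k (a + 1) * x ^ (a + 1)) + 1 := by
      have hA := Finset.sum_range_succ (fun a => stT q k a * x ^ a) (k + 1)
      have hB := Finset.sum_range_succ' (fun a => stT q k a * x ^ a) (k + 1)
      rw [hA] at hB
      simp only [stT_top, stT_zero, zero_mul, add_zero, pow_zero, one_mul] at hB
      exact hB
    have hRHS : ∑ a ∈ Finset.range (k + 1),
          (-(stT q k (a + 1)) - d * stT q k a) * (q ^ (a + 1)) ^ (j + 1)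
        = -(∑ a ∈ Finset.range (k + 1), stT q k (a + 1) * x ^ (a + 1))
          - d * ((∑ a ∈ Finset.range (k + 1), stT q k a * x ^ a) * x) := by
      rw [Finset.sum_mul, Finset.mul_sum, ← Finset.sum_neg_distrib, ← Finset.sum_sub_distrib]
      refine Finset.sum_congr rfl fun a _ => ?_
      have hxp : (q ^ (a + 1)) ^ (j + 1) = x ^ (a + 1) := by
        rw [hx, ← pow_mul, ← pow_mul, Nat.mul_comm]
      rw [hxp]
      ring
    rw [hRHS, h0]
    ring
  -- Step 2: sum of geometric series
  have hsum : HasSum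
      (fun j : ℕ => ∑ a ∈ Finset.range (k + 1),
        (-(stT q k (a + 1)) - (1 - q ^ k) / (1 - q) * stT q k a) * (q ^ (a + 1)) ^ (j + 1))
      (∑ a ∈ Finset.range (k + 1),
        (-(stT q k (a + 1)) - (1 - q ^ k) / (1 - q) * stT q k a) * (q ^ (a + 1) / (1 - q ^ (a + 1)))) := by
    refine hasSum_sum fun a _ => ?_
    have hr0 : (0 : ℝ) ≤ q ^ (a + 1) := by positivity
    have hr1 : q ^ (a + 1) < 1 := pow_lt_one₀ hq0.le hq1 (by omega)
    have h := (hasSum_geometric_of_lt_one hr0 hr1).mul_left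
      ((-(stT q k (a + 1)) - (1 - q ^ k) / (1 - q) * stT q k a) * q ^ (a + 1))
    have h2 : (fun j : ℕ =>
        (-(stT q k (a + 1)) - (1 - q ^ k) / (1 - q) * stT q k a) * q ^ (a + 1) * (q ^ (a + 1)) ^ j)
        = fun j : ℕ =>
          (-(stT q k (a + 1)) - (1 - q ^ k) / (1 - q) * stT q k a) * (q ^ (a + 1)) ^ (j + 1) :=
      funext fun j => by rw [pow_succ]; ring
    rw [h2] at h
    have h3 : (-(stT q k (a + 1)) - (1 - q ^ k) / (1 - q) * stT q k a) * (q ^ (a + 1) / (1 - q ^ (a + 1)))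
        = (-(stT q k (a + 1)) - (1 - q ^ k) / (1 - q) * stT q k a) * q ^ (a + 1) * (1 - q ^ (a + 1))⁻¹ := by
      rw [div_eq_mul_inv]; ring
    rwa [h3]
  -- Step 3: evaluate the sum of values
  have hval : (∑ a ∈ Finset.range (k + 1),
        (-(stT q k (a + 1)) - (1 - q ^ k) / (1 - q) * stT q k a) * (q ^ (a + 1) / (1 - q ^ (a + 1))))
      = (∑ i ∈ Finset.Icc 1 k,
          ((-1 : ℝ) ^ (i - 1) / (p ^ (i * (i - 1) / 2) * (p ^ i - 1))) *
            ∏ m ∈ Finset.Icc 1 i,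
              ((1 - p ^ (-((k : ℤ) - (m : ℤ) + 1))) / (1 - p ^ (-(m : ℤ))))) +
        1 / (p ^ (k + 1) - 1) - 1 / (p - 1) := by
    have hsplit : (∑ a ∈ Finset.range (k + 1),
          (-(stT q k (a + 1)) - (1 - q ^ k) / (1 - q) * stT q k a) * (q ^ (a + 1) / (1 - q ^ (a + 1))))
        = (∑ a ∈ Finset.range (k + 1), -(stT q k (a + 1)) * (q ^ (a + 1) / (1 - q ^ (a + 1))))
          - (1 - q ^ k) / (1 - q) *
            ∑ a ∈ Finset.range (k + 1), stT q k a * (q ^ (a + 1) / (1 - q ^ (a + 1))) := by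
      rw [Finset.mul_sum, ← Finset.sum_sub_distrib]
      exact Finset.sum_congr rfl fun a _ => by ring
    have hBsum : ∑ a ∈ Finset.range (k + 1), stT q k a * (q ^ (a + 1) / (1 - q ^ (a + 1)))
        = q / (1 - q ^ (k + 1)) := by
      have hterm : ∀ a : ℕ, stT q k a * (q ^ (a + 1) / (1 - q ^ (a + 1)))
          = q * ((-1 : ℝ) ^ a * q ^ ((a + 1) * a / 2) * stGb q k a / (1 - q ^ (a + 1))) := by
        intro a
        have e : q ^ (a * (a - 1) / 2) * q ^ (a + 1) = q * q ^ ((a + 1) * a / 2) := by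
          rw [← pow_add,
            show a * (a - 1) / 2 + (a + 1) = 1 + (a + 1) * a / 2 from by have := st_tri a; omega,
            pow_add, pow_one]
        simp only [stT]
        linear_combination ((-1 : ℝ) ^ a * stGb q k a / (1 - q ^ (a + 1))) * e
      rw [Finset.sum_congr rfl (fun a _ => hterm a), ← Finset.mul_sum, st_key hq0 hq1 k,
        mul_one_div]
    have hAsum : ∑ a ∈ Finset.range (k + 1), -(stT q k (a + 1)) * (q ^ (a + 1) / (1 - q ^ (a + 1)))
        = ∑ i ∈ Finset.Icc 1 k, ((-1 : ℝ) ^ (i - 1) / (p ^ (i * (i - 1) / 2) * (p ^ i - 1))) *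
            ∏ m ∈ Finset.Icc 1 i,
              ((1 - p ^ (-((k : ℤ) - (m : ℤ) + 1))) / (1 - p ^ (-(m : ℤ)))) := by
      rw [Finset.sum_range_succ, stT_top, show Finset.Icc 1 k = Finset.Ico 1 (k + 1) from rfl,
        Finset.sum_Ico_eq_sum_range]
      simp only [Nat.add_sub_cancel, neg_zero, zero_mul, add_zero]
      refine Finset.sum_congr rfl fun a ha => ?_
      have hak : a < k := Finset.mem_range.1 ha
      rw [Nat.add_comm 1 a]
      have hprod : ∏ m ∈ Finset.Icc 1 (a + 1),
            ((1 - p ^ (-((k : ℤ) - (m : ℤ) + 1))) / (1 - p ^ (-(m : ℤ))))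
          = stGb q k (a + 1) := by
        rw [stGb]
        refine Finset.prod_congr rfl fun m hm => ?_
        obtain ⟨hm1, hm2⟩ := Finset.mem_Icc.1 hm
        have hmk : m ≤ k + 1 := by omega
        have e4 : (-((k : ℤ) - (m : ℤ) + 1)) = -(((k + 1 - m : ℕ)) : ℤ) := by
          rw [Nat.cast_sub hmk]
          push_cast
          ring
        rw [e4, hqp, hqp]
      rw [hprod, hgeom (a + 1) (by omega)]
      simp only [stT, Nat.add_sub_cancel]
      rw [hq_inv_pow ((a + 1) * a / 2), pow_succ]
      have hpp : (p : ℝ) ^ ((a + 1) * a / 2) ≠ 0 := pow_ne_zero _ hpne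
      have hpq : (p : ℝ) ^ (a + 1) - 1 ≠ 0 := hpow1 (a + 1) (by omega)
      field_simp
    have hq1ne : (1 : ℝ) - q ≠ 0 := by
      have := hone 1 (le_refl 1)
      simpa using this
    have hg1 : q / (1 - q) = 1 / (p - 1) := by
      have := hgeom 1 (le_refl 1)
      simpa using this
    have hgk : q ^ (k + 1) / (1 - q ^ (k + 1)) = 1 / (p ^ (k + 1) - 1) := hgeom (k + 1) (by omega)
    have htail : -((1 - q ^ k) / (1 - q) * (q / (1 - q ^ (k + 1))))
        = 1 / (p ^ (k + 1) - 1) - 1 / (p - 1) := by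
      rw [← hgk, ← hg1]
      have hk1ne : (1 : ℝ) - q ^ (k + 1) ≠ 0 := hone (k + 1) (by omega)
      field_simp
      ring
    rw [hsplit, hAsum, hBsum]
    linarith [htail]
  rw [show (fun j : ℕ =>
      1 - (1 + p ^ (1 - ((j : ℤ) + 1) - (k : ℤ)) * ((p ^ k - 1) / (p - 1))) *
        ∏ i ∈ Finset.range k, (1 - p ^ (-((j : ℤ) + 1) - (i : ℤ))))
    = fun j : ℕ => ∑ a ∈ Finset.range (k + 1),
        (-(stT q k (a + 1)) - (1 - q ^ k) / (1 - q) * stT q k a) * (q ^ (a + 1)) ^ (j + 1)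
    from funext hfun, ← hval]
  exact hsum
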